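/- Let H ≥ 1, let M be a positive stochastic H×H real matrix whose powers M^μ converge entrywise to M̄, and suppose M satisfies the monotone convergence property. Fix indices i, j. Then for every x > 0: (1) if Mᵢⱼ > M̄ᵢⱼ, the function x ↦ (M(x))ᵢⱼ, where M(x) := (exp(xM) − I)/(eˣ − 1), has strictly negative derivative at x; (2) if Mᵢⱼ < M̄ᵢⱼ, this function has strictly positive derivative at x. -/

import Mathlib

open Matrix Filter

section Stmt2Aux

open NormedSpace

/-- The coefficient sequence appearing in the derivative numerator. -/
noncomputable def cseq (x : ℝ) (n : ℕ) : ℝ :=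
  (Real.exp x - 1) * (x ^ n / n.factorial) - Real.exp x * (x ^ (n + 1) / (n + 1).factorial)

lemma summable_pow_fac (x : ℝ) : Summable (fun n : ℕ => x ^ n / n.factorial) :=
  Real.summable_pow_div_factorial x

lemma summable_pow_fac_succ (x : ℝ) :
    Summable (fun n : ℕ => x ^ (n + 1) / (n + 1).factorial) :=
  (summable_nat_add_iff 1).2 (summable_pow_fac x)

lemma tsum_pow_fac (x : ℝ) : ∑' n : ℕ, x ^ n / n.factorial = Real.exp x := by
  rw [Real.exp_eq_exp_ℝ, NormedSpace.exp_eq_tsum_div]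

lemma tsum_pow_fac_succ (x : ℝ) :
    ∑' n : ℕ, x ^ (n + 1) / (n + 1).factorial = Real.exp x - 1 := by
  have h := Summable.tsum_eq_zero_add (summable_pow_fac x)
  rw [tsum_pow_fac x] at h
  simp only [pow_zero, Nat.factorial_zero, Nat.cast_one, div_one] at h
  linarith

lemma summable_cseq (x : ℝ) : Summable (cseq x) :=
  ((summable_pow_fac x).mul_left _).sub ((summable_pow_fac_succ x).mul_left _)

lemma tsum_cseq (x : ℝ) : ∑' n : ℕ, cseq x n = 0 := by
  unfold cseq
  rw [Summable.tsum_sub ((summable_pow_fac x).mul_left _) ((summable_pow_fac_succ x).mul_left _),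
    tsum_mul_left, tsum_mul_left, tsum_pow_fac, tsum_pow_fac_succ]
  ring

lemma cseq_factor {x : ℝ} (hx : 0 < x) (n : ℕ) :
    cseq x n = (x ^ n / n.factorial * (Real.exp x - 1) / (n + 1))
      * ((n + 1 : ℝ) - x * Real.exp x / (Real.exp x - 1)) := by
  have he : (1 : ℝ) < Real.exp x := Real.one_lt_exp_iff.2 hx
  have hne : Real.exp x - 1 ≠ 0 := by linarith
  have hfac : ((n + 1).factorial : ℝ) = (n + 1) * n.factorial := by
    rw [Nat.factorial_succ]; push_cast; ring
  have hfn : (n.factorial : ℝ) ≠ 0 := Nat.cast_ne_zero.2 n.factorial_ne_zero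
  have hn1 : ((n : ℝ) + 1) ≠ 0 := by positivity
  unfold cseq
  rw [hfac]
  field_simp
  ring

lemma core_neg {x : ℝ} (hx : 0 < x) (a : ℕ → ℝ)
    (ha0 : ∀ n, 0 ≤ a n) (ha1 : ∀ n, a n ≤ 1)
    (hmono : ∀ m n : ℕ, 1 ≤ m → m ≤ n → a n ≤ a m)
    (hlt : ∀ N : ℕ, ∃ m, N ≤ m ∧ a m < a 1) :
    ∑' n : ℕ, a (n + 1) * cseq x n < 0 := by
  have he : (1 : ℝ) < Real.exp x := Real.one_lt_exp_iff.2 hx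
  have hem : (1 - x) * Real.exp x < 1 := by
    have h := Real.add_one_lt_exp (x := -x) (by linarith)
    have hep : (0 : ℝ) < Real.exp x := Real.exp_pos x
    have hinv : Real.exp (-x) = (Real.exp x)⁻¹ := Real.exp_neg x
    rw [hinv] at h
    calc (1 - x) * Real.exp x < (Real.exp x)⁻¹ * Real.exp x := by
          apply mul_lt_mul_of_pos_right _ hep
          linarith
      _ = 1 := inv_mul_cancel₀ (ne_of_gt hep)
  set e := Real.exp x with hedef
  set θ := x * e / (e - 1) with hθdef
  have hθ1 : 1 < θ := by
    rw [hθdef, lt_div_iff₀ (by linarith)]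
    nlinarith
  have hθpos : 0 < θ := by linarith
  have hsign : ∀ n : ℕ, ((n + 1 : ℝ) ≤ θ → cseq x n ≤ 0)
      ∧ (θ ≤ (n + 1 : ℝ) → 0 ≤ cseq x n)
      ∧ ((n + 1 : ℝ) < θ → cseq x n < 0)
      ∧ (θ < (n + 1 : ℝ) → 0 < cseq x n) := by
    intro n
    have hw : 0 < x ^ n / n.factorial * (e - 1) / (n + 1) := by
      have hf : (0:ℝ) < n.factorial := by positivity
      have h1 : (0:ℝ) < x ^ n := by positivity
      have h2 : (0:ℝ) < (n:ℝ) + 1 := by positivity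
      apply div_pos (mul_pos (div_pos h1 hf) (by linarith)) h2
    rw [hedef] at hw
    refine ⟨fun h => ?_, fun h => ?_, fun h => ?_, fun h => ?_⟩ <;>
      rw [cseq_factor hx n] <;> rw [← hedef, ← hθdef]
    · exact mul_nonpos_of_nonneg_of_nonpos hw.le (by linarith)
    · exact mul_nonneg hw.le (by linarith)
    · exact mul_neg_of_pos_of_neg hw (by linarith)
    · exact mul_pos hw (by linarith)
  set K : ℕ := ⌈θ⌉₊ - 1 with hKdef
  have hceil1 : 1 ≤ ⌈θ⌉₊ := Nat.one_le_ceil_iff.2 hθpos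
  have hKcast : (K : ℝ) = (⌈θ⌉₊ : ℝ) - 1 := by
    rw [hKdef, Nat.cast_sub hceil1, Nat.cast_one]
  have hKltθ : (K : ℝ) < θ := by
    have := Nat.ceil_lt_add_one hθpos.le
    rw [hKcast]; linarith
  have hθleK1 : θ ≤ (K : ℝ) + 1 := by
    have := Nat.le_ceil θ
    rw [hKcast]; linarith
  have hK1 : 1 ≤ K := by
    have h2 : 2 ≤ ⌈θ⌉₊ := by
      rw [← Nat.lt_ceil] at *
      exact_mod_cast Nat.lt_ceil.2 (by exact_mod_cast hθ1)
    omega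
  set p := a (K + 1) with hpdef
  have hfle : ∀ n : ℕ, (a (n + 1) - p) * cseq x n ≤ 0 := by
    intro n
    rcases lt_or_ge n K with hn | hn
    · have hc : cseq x n ≤ 0 := (hsign n).1 (by
        have : (n:ℝ) + 1 ≤ (K:ℝ) := by exact_mod_cast Nat.succ_le_of_lt hn
        linarith)
      have ha : p ≤ a (n + 1) := hmono (n + 1) (K + 1) (by omega) (by omega)
      exact mul_nonpos_of_nonneg_of_nonpos (by linarith) hc
    · have hc : 0 ≤ cseq x n := (hsign n).2.1 (by
        have : (K:ℝ) + 1 ≤ (n:ℝ) + 1 := by exact_mod_cast Nat.succ_le_succ hn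
        linarith)
      have ha : a (n + 1) ≤ p := hmono (K + 1) (n + 1) (by omega) (by omega)
      exact mul_nonpos_of_nonpos_of_nonneg (by linarith) hc
  obtain ⟨m, hmK, hma⟩ := hlt (K + 2)
  have hstrict : ∃ n₀ : ℕ, (a (n₀ + 1) - p) * cseq x n₀ < 0 := by
    rcases lt_or_ge p (a 1) with hp | hp
    · refine ⟨0, ?_⟩
      have hc0 : cseq x 0 < 0 := (hsign 0).2.2.1 (by push_cast; linarith)
      exact mul_neg_of_pos_of_neg (by simpa using sub_pos.2 hp) hc0
    · refine ⟨m - 1, ?_⟩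
      have hm1 : m - 1 + 1 = m := by omega
      have hc : 0 < cseq x (m - 1) := by
        refine (hsign (m - 1)).2.2.2 ?_
        have hcast : ((m - 1 : ℕ) : ℝ) = (m : ℝ) - 1 := by
          rw [Nat.cast_sub (by omega : 1 ≤ m)]; norm_num
        have hm' : (K:ℝ) + 2 ≤ (m:ℝ) := by exact_mod_cast hmK
        rw [hcast]; linarith
      rw [hm1]
      have : a m < p := lt_of_lt_of_le hma hp
      exact mul_neg_of_neg_of_pos (by linarith) hc
  obtain ⟨n₀, hn₀⟩ := hstrict
  have habs : ∀ (b : ℕ → ℝ), (∀ n, |b n| ≤ 1) → Summable (fun n => b n * cseq x n) := by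
    intro b hb
    refine Summable.of_norm_bounded (g := fun n => |cseq x n|) (summable_cseq x).abs fun n => ?_
    rw [Real.norm_eq_abs, abs_mul]
    calc |b n| * |cseq x n| ≤ 1 * |cseq x n| :=
          mul_le_mul_of_nonneg_right (hb n) (abs_nonneg _)
      _ = |cseq x n| := one_mul _
  have hsf : Summable (fun n => (a (n + 1) - p) * cseq x n) := by
    refine habs _ fun n => abs_le.2 ⟨?_, ?_⟩
    · have h1 := ha0 (n + 1); have h2 := ha1 (K + 1); rw [hpdef]; linarith
    · have h1 := ha1 (n + 1); have h2 := ha0 (K + 1); rw [hpdef]; linarith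
  have hneg : ∑' n : ℕ, (a (n + 1) - p) * cseq x n < 0 := by
    have := Summable.tsum_lt_tsum (g := fun _ : ℕ => (0:ℝ)) hfle hn₀ hsf summable_zero
    simpa using this
  have hsplit : ∑' n : ℕ, a (n + 1) * cseq x n
      = (∑' n : ℕ, (a (n + 1) - p) * cseq x n) + p * ∑' n : ℕ, cseq x n := by
    rw [← tsum_mul_left, ← Summable.tsum_add hsf (Summable.mul_left p (summable_cseq x))]
    exact tsum_congr fun n => by ring
  rw [hsplit, tsum_cseq]
  linarith

variable {H : ℕ}

lemma exp_entry_hasSum (M : Matrix (Fin H) (Fin H) ℝ) (x : ℝ) (i j : Fin H) :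
    HasSum (fun n : ℕ => x ^ n / n.factorial * (M ^ n) i j) (NormedSpace.exp (x • M) i j) := by
  letI : SeminormedRing (Matrix (Fin H) (Fin H) ℝ) := Matrix.linftyOpSemiNormedRing
  letI : NormedRing (Matrix (Fin H) (Fin H) ℝ) := Matrix.linftyOpNormedRing
  letI : NormedAlgebra ℝ (Matrix (Fin H) (Fin H) ℝ) := Matrix.linftyOpNormedAlgebra
  have h1 : HasSum (fun n : ℕ => ((n.factorial : ℝ))⁻¹ • (x • M) ^ n) (exp (x • M)) :=
    exp_series_hasSum_exp' (x • M)
  have h2 := Pi.hasSum.mp (Pi.hasSum.mp h1 i) j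
  convert h2 using 2 with n
  rw [smul_pow, Matrix.smul_apply, Matrix.smul_apply, smul_eq_mul, smul_eq_mul]
  ring

lemma exp_entry (M : Matrix (Fin H) (Fin H) ℝ) (x : ℝ) (i j : Fin H) :
    NormedSpace.exp (x • M) i j = ∑' n : ℕ, x ^ n / n.factorial * (M ^ n) i j :=
  (exp_entry_hasSum M x i j).tsum_eq.symm

lemma exp_mul_entry (M : Matrix (Fin H) (Fin H) ℝ) (x : ℝ) (i j : Fin H) :
    (NormedSpace.exp (x • M) * M) i j
      = ∑' n : ℕ, x ^ n / n.factorial * (M ^ (n + 1)) i j := by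
  rw [Matrix.mul_apply]
  calc ∑ k, NormedSpace.exp (x • M) i k * M k j
      = ∑ k, ∑' n : ℕ, x ^ n / n.factorial * (M ^ n) i k * M k j := by
        refine Finset.sum_congr rfl fun k _ => ?_
        rw [exp_entry, ← tsum_mul_right]
    _ = ∑' n : ℕ, ∑ k, x ^ n / n.factorial * (M ^ n) i k * M k j := by
        refine (Summable.tsum_finsetSum fun k _ => ?_).symm
        exact (exp_entry_hasSum M x i k).summable.mul_right _
    _ = ∑' n : ℕ, x ^ n / n.factorial * (M ^ (n + 1)) i j := by
        refine tsum_congr fun n => ?_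
        rw [pow_succ, Matrix.mul_apply, Finset.mul_sum]
        exact Finset.sum_congr rfl fun k _ => by ring

lemma hasDerivAt_exp_entry (M : Matrix (Fin H) (Fin H) ℝ) (x : ℝ) (i j : Fin H) :
    HasDerivAt (fun y : ℝ => NormedSpace.exp (y • M) i j)
      ((NormedSpace.exp (x • M) * M) i j) x := by
  letI : SeminormedRing (Matrix (Fin H) (Fin H) ℝ) := Matrix.linftyOpSemiNormedRing
  letI : NormedRing (Matrix (Fin H) (Fin H) ℝ) := Matrix.linftyOpNormedRing
  letI : NormedAlgebra ℝ (Matrix (Fin H) (Fin H) ℝ) := Matrix.linftyOpNormedAlgebra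
  have h : HasDerivAt (fun y : ℝ => NormedSpace.exp (y • M))
      (NormedSpace.exp (x • M) * M) x := hasDerivAt_exp_smul_const M x
  exact (LinearMap.toContinuousLinearMap
    (Matrix.entryLinearMap ℝ ℝ i j)).hasFDerivAt.comp_hasDerivAt x h

lemma pow_entry_nonneg (M : Matrix (Fin H) (Fin H) ℝ) (hpos : ∀ i j, 0 < M i j) :
    ∀ (n : ℕ) (i j : Fin H), 0 ≤ (M ^ n) i j := by
  intro n
  induction n with
  | zero => intro i j; rw [pow_zero, Matrix.one_apply]; split <;> norm_num
  | succ n ih =>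
    intro i j
    rw [pow_succ, Matrix.mul_apply]
    exact Finset.sum_nonneg fun k _ => mul_nonneg (ih i k) (hpos k j).le

lemma pow_rowsum (M : Matrix (Fin H) (Fin H) ℝ) (hrow : ∀ i, ∑ j, M i j = 1) :
    ∀ (n : ℕ) (i : Fin H), ∑ j, (M ^ n) i j = 1 := by
  intro n
  induction n with
  | zero => intro i; simp [Matrix.one_apply]
  | succ n ih =>
    intro i
    simp only [pow_succ, Matrix.mul_apply]
    rw [Finset.sum_comm]
    calc ∑ k, ∑ j, (M ^ n) i k * M k j = ∑ k, (M ^ n) i k * ∑ j, M k j := by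
          simp [Finset.mul_sum]
      _ = 1 := by simp [hrow, ih i]

lemma pow_entry_le_one (M : Matrix (Fin H) (Fin H) ℝ) (hpos : ∀ i j, 0 < M i j)
    (hrow : ∀ i, ∑ j, M i j = 1) (n : ℕ) (i j : Fin H) : (M ^ n) i j ≤ 1 := by
  rw [← pow_rowsum M hrow n i]
  exact Finset.single_le_sum (fun k _ => pow_entry_nonneg M hpos n i k) (Finset.mem_univ j)

end Stmt2Aux

/-- Under the monotone convergence property, each entry of `M(x) = (exp(xM) - I)/(eˣ - 1)`
has a strictly negative (resp. positive) derivative at every `x > 0` when `Mᵢⱼ > M̄ᵢⱼ`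
(resp. `Mᵢⱼ < M̄ᵢⱼ`). -/
theorem stmt2 (H : ℕ) (hH : 1 ≤ H) (M Mbar : Matrix (Fin H) (Fin H) ℝ)
    (hpos : ∀ i j, 0 < M i j) (hrow : ∀ i, ∑ j, M i j = 1)
    (hconv : ∀ i j, Tendsto (fun μ : ℕ => (M ^ μ) i j) atTop (nhds (Mbar i j)))
    (hmc : ∀ i j, ∀ μ : ℕ, 1 ≤ μ →
      (Mbar i j < M i j →
        Mbar i j ≤ (M ^ (μ + 1)) i j ∧ (M ^ (μ + 1)) i j ≤ (M ^ μ) i j ∧ (M ^ μ) i j ≤ M i j) ∧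
      (M i j < Mbar i j →
        M i j ≤ (M ^ μ) i j ∧ (M ^ μ) i j ≤ (M ^ (μ + 1)) i j ∧ (M ^ (μ + 1)) i j ≤ Mbar i j))
    (i j : Fin H) (x : ℝ) (hx : 0 < x) :
    (Mbar i j < M i j → ∃ d : ℝ, d < 0 ∧
      HasDerivAt (fun y : ℝ => ((Real.exp y - 1)⁻¹ • (NormedSpace.exp (y • M) - 1)) i j) d x) ∧
    (M i j < Mbar i j → ∃ d : ℝ, 0 < d ∧
      HasDerivAt (fun y : ℝ => ((Real.exp y - 1)⁻¹ • (NormedSpace.exp (y • M) - 1)) i j) d x) := by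
  have he : (1:ℝ) < Real.exp x := Real.one_lt_exp_iff.2 hx
  have hne : Real.exp x - 1 ≠ 0 := by linarith
  have ha0 : ∀ n : ℕ, 0 ≤ (M ^ n) i j := fun n => pow_entry_nonneg M hpos n i j
  have ha1 : ∀ n : ℕ, (M ^ n) i j ≤ 1 := fun n => pow_entry_le_one M hpos hrow n i j
  have ha1eq : (M ^ 1) i j = M i j := by rw [pow_one]
  have hS1 : Summable (fun n : ℕ => x ^ n / n.factorial * (M ^ (n + 1)) i j) := by
    refine Summable.of_nonneg_of_le (fun n => ?_) (fun n => ?_) (summable_pow_fac x)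
    · exact mul_nonneg (by positivity) (ha0 _)
    · calc x ^ n / n.factorial * (M ^ (n + 1)) i j ≤ x ^ n / n.factorial * 1 :=
          mul_le_mul_of_nonneg_left (ha1 _) (by positivity)
        _ = x ^ n / n.factorial := mul_one _
  have hS2 : Summable (fun n : ℕ => x ^ (n + 1) / (n + 1).factorial * (M ^ (n + 1)) i j) := by
    refine Summable.of_nonneg_of_le (fun n => ?_) (fun n => ?_) (summable_pow_fac_succ x)
    · exact mul_nonneg (by positivity) (ha0 _)
    · calc x ^ (n + 1) / (n + 1).factorial * (M ^ (n + 1)) i j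
          ≤ x ^ (n + 1) / (n + 1).factorial * 1 :=
          mul_le_mul_of_nonneg_left (ha1 _) (by positivity)
        _ = x ^ (n + 1) / (n + 1).factorial := mul_one _
  have hsum_ac : Summable (fun n : ℕ => (M ^ (n + 1)) i j * cseq x n) := by
    refine Summable.of_norm_bounded (g := fun n => |cseq x n|) (summable_cseq x).abs fun n => ?_
    rw [Real.norm_eq_abs, abs_mul]
    calc |(M ^ (n + 1)) i j| * |cseq x n| ≤ 1 * |cseq x n| := by
          apply mul_le_mul_of_nonneg_right _ (abs_nonneg _)
          rw [abs_le]; exact ⟨by linarith [ha0 (n + 1)], ha1 _⟩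
      _ = |cseq x n| := one_mul _
  set N : ℝ := ∑' n : ℕ, (M ^ (n + 1)) i j * cseq x n with hNdef
  have hNeq : N = (Real.exp x - 1) * (∑' n : ℕ, x ^ n / n.factorial * (M ^ (n + 1)) i j)
      - Real.exp x * (∑' n : ℕ, x ^ (n + 1) / (n + 1).factorial * (M ^ (n + 1)) i j) := by
    rw [hNdef, ← tsum_mul_left, ← tsum_mul_left, ← Summable.tsum_sub (hS1.mul_left _) (hS2.mul_left _)]
    exact tsum_congr fun n => by unfold cseq; ring
  have hux : NormedSpace.exp (x • M) i j
      = (1 : Matrix (Fin H) (Fin H) ℝ) i j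
        + ∑' n : ℕ, x ^ (n + 1) / (n + 1).factorial * (M ^ (n + 1)) i j := by
    rw [exp_entry M x i j, Summable.tsum_eq_zero_add (exp_entry_hasSum M x i j).summable]
    norm_num
  have hD : HasDerivAt
      (fun y : ℝ => ((Real.exp y - 1)⁻¹ • (NormedSpace.exp (y • M) - 1)) i j)
      (N / (Real.exp x - 1) ^ 2) x := by
    have h1 : HasDerivAt (fun y : ℝ => (Real.exp y - 1)⁻¹)
        (-(Real.exp x) / (Real.exp x - 1) ^ 2) x :=
      ((Real.hasDerivAt_exp x).sub_const 1).inv hne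
    have h2 : HasDerivAt
        (fun y : ℝ => NormedSpace.exp (y • M) i j - (1 : Matrix (Fin H) (Fin H) ℝ) i j)
        ((NormedSpace.exp (x • M) * M) i j) x :=
      (hasDerivAt_exp_entry M x i j).sub_const _
    have h3 := h1.mul h2
    have hfun : (fun y : ℝ => ((Real.exp y - 1)⁻¹ • (NormedSpace.exp (y • M) - 1)) i j)
        = fun y : ℝ => (Real.exp y - 1)⁻¹
            * (NormedSpace.exp (y • M) i j - (1 : Matrix (Fin H) (Fin H) ℝ) i j) := by
      funext y
      rw [Matrix.smul_apply, Matrix.sub_apply, smul_eq_mul]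
    rw [hfun]
    refine h3.congr_deriv ?_
    rw [exp_mul_entry M x i j, hux, hNeq]
    field_simp
    ring
  have hsq : (0:ℝ) < (Real.exp x - 1) ^ 2 := by positivity
  constructor
  · intro h
    refine ⟨N / (Real.exp x - 1) ^ 2, ?_, hD⟩
    have hstep : ∀ μ : ℕ, 1 ≤ μ → (M ^ (μ + 1)) i j ≤ (M ^ μ) i j :=
      fun μ hμ => ((hmc i j μ hμ).1 h).2.1
    have hmono : ∀ n m : ℕ, 1 ≤ m → m ≤ n → (M ^ n) i j ≤ (M ^ m) i j := by
      intro n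
      induction n with
      | zero => intro m hm hmn; exact absurd (hm.trans hmn) (by norm_num)
      | succ n ih =>
        intro m hm hmn
        rcases Nat.eq_or_lt_of_le hmn with heq | hlt
        · rw [heq]
        · exact le_trans (hstep n (by omega)) (ih m hm (by omega))
    have hlt : ∀ Nn : ℕ, ∃ m, Nn ≤ m ∧ (M ^ m) i j < (M ^ 1) i j := by
      have hev : ∀ᶠ μ in atTop, (M ^ μ) i j < (M ^ 1) i j :=
        (hconv i j).eventually_lt_const (by rw [ha1eq]; exact h)
      intro Nn
      obtain ⟨m, hm1, hm2⟩ := (hev.and (eventually_ge_atTop Nn)).exists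
      exact ⟨m, hm2, hm1⟩
    have hcore := core_neg hx (fun n => (M ^ n) i j) ha0 ha1
      (fun m n hm hmn => hmono n m hm hmn) hlt
    refine div_neg_of_neg_of_pos ?_ hsq
    rw [hNdef]
    simpa using hcore
  · intro h
    refine ⟨N / (Real.exp x - 1) ^ 2, ?_, hD⟩
    have hstep : ∀ μ : ℕ, 1 ≤ μ → (M ^ μ) i j ≤ (M ^ (μ + 1)) i j :=
      fun μ hμ => ((hmc i j μ hμ).2 h).2.1
    have hmono : ∀ n m : ℕ, 1 ≤ m → m ≤ n → (M ^ m) i j ≤ (M ^ n) i j := by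
      intro n
      induction n with
      | zero => intro m hm hmn; exact absurd (hm.trans hmn) (by norm_num)
      | succ n ih =>
        intro m hm hmn
        rcases Nat.eq_or_lt_of_le hmn with heq | hlt
        · rw [heq]
        · exact le_trans (ih m hm (by omega)) (hstep n (by omega))
    have hlt : ∀ Nn : ℕ, ∃ m, Nn ≤ m ∧ (M ^ 1) i j < (M ^ m) i j := by
      have hev : ∀ᶠ μ in atTop, (M ^ 1) i j < (M ^ μ) i j :=
        (hconv i j).eventually_const_lt (by rw [ha1eq]; exact h)
      intro Nn
      obtain ⟨m, hm1, hm2⟩ := (hev.and (eventually_ge_atTop Nn)).exists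
      exact ⟨m, hm2, hm1⟩
    have hcore := core_neg hx (fun n => 1 - (M ^ n) i j)
      (fun n => sub_nonneg.2 (ha1 n)) (fun n => sub_le_self 1 (ha0 n))
      (fun m n hm hmn => by simpa using sub_le_sub_left (hmono n m hm hmn) 1)
      (fun Nn => by
        obtain ⟨m, hm1, hm2⟩ := hlt Nn
        exact ⟨m, hm1, by simpa using sub_lt_sub_left hm2 1⟩)
    have hsplit : ∑' n : ℕ, (1 - (M ^ (n + 1)) i j) * cseq x n
        = (∑' n : ℕ, cseq x n) - N := by
      rw [hNdef, ← Summable.tsum_sub (summable_cseq x) hsum_ac]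
      exact tsum_congr fun n => by ring
    rw [tsum_cseq] at hsplit
    have hcore' : ∑' n : ℕ, (1 - (M ^ (n + 1)) i j) * cseq x n < 0 := by simpa using hcore
    have hNpos : 0 < N := by rw [hsplit] at hcore'; linarith
    exact div_pos hNpos hsq
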